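/- Iteration lemma for the Hölder estimate: Fix μ with 0 < μ < min(1 − d/(d+κ), 2 − d/(d/2+κ′)), and let ε₀ > 0 and θ ∈ (0,1/8) be the constants given by the improvement lemma. Then for all integers k ≥ 1, all ε < θ^{k−1}ε₀, all ψ ∈ C^{1,ω}_{M₀}, all A ∈ A^{0,ν₀}, all f ∈ L^{d/2+κ′}(D^ε(0,1)), all F ∈ L^{d+κ}(D^ε(0,1)), and all weak solutions u^ε of −∇·A(x/ε)∇u^ε = f + ∇·F in D^ε(0,1) with u^ε = 0 on Δ^ε(0,1): if the mean value of |u^ε|² over D^ε(0,1) is at most 1, ‖f‖_{L^{d/2+κ′}(D^ε(0,1))} ≤ ε₀ and ‖F‖_{L^{d+κ}(D^ε(0,1))} ≤ ε₀, then the mean value of |u^ε|² over D^ε(0,θ^k) is at most θ^{2kμ}. -/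

import Mathlib

/-!
Common definitions for elliptic systems with periodically oscillating coefficients
in "bumpy" half-spaces, following Kenig-Prange,
"Uniform Lipschitz Estimates in Bumpy Half-Spaces".
Throughout, the dimension is `d = n + 1` and points of `ℝ^d` are modelled as
`Fin (n+1) → ℝ` (with the sup norm); the first `n` coordinates are the horizontal
variable `x'` and the last one is the vertical variable `x_d`.
-/

noncomputable section

open MeasureTheory Metric Set

namespace Bumpy

/-- Points of `ℝ^d` with `d = n + 1`. -/
abbrev Pt (n : ℕ) := Fin (n + 1) → ℝ

variable {n N : ℕ}

/-- Horizontal part `x'` of a point. -/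
def hp (x : Pt n) : Fin n → ℝ := fun i => x i.castSucc

/-- Vertical coordinate `x_d` of a point. -/
def vc (x : Pt n) : ℝ := x (Fin.last n)

/-- The oscillating boundary graph function `x' ↦ ε ψ(x'/ε)`. -/
def bgraph (ε : ℝ) (ψ : (Fin n → ℝ) → ℝ) (x' : Fin n → ℝ) : ℝ := ε * ψ (ε⁻¹ • x')

/-- The bumpy slab `D^ε(0,r)`. -/
def bumpyD (n : ℕ) (ε : ℝ) (ψ : (Fin n → ℝ) → ℝ) (r : ℝ) : Set (Pt n) :=
  {x | ‖hp x‖ < r ∧ bgraph ε ψ (hp x) < vc x ∧ vc x < bgraph ε ψ (hp x) + r}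

/-- The bottom boundary portion `Δ^ε(0,r)`. -/
def bumpyB (n : ℕ) (ε : ℝ) (ψ : (Fin n → ℝ) → ℝ) (r : ℝ) : Set (Pt n) :=
  {x | ‖hp x‖ < r ∧ vc x = bgraph ε ψ (hp x)}

/-- The bumpy half-space `D^ε_+`. -/
def bumpyHalf (n : ℕ) (ε : ℝ) (ψ : (Fin n → ℝ) → ℝ) : Set (Pt n) :=
  {x | bgraph ε ψ (hp x) < vc x}

/-- The full bumpy boundary `Δ^ε`. -/
def bumpyBdry (n : ℕ) (ε : ℝ) (ψ : (Fin n → ℝ) → ℝ) : Set (Pt n) :=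
  {x | vc x = bgraph ε ψ (hp x)}

/-- Vertical distance to the bumpy boundary, `δ(x) = x_d − εψ(x'/ε)`. -/
def bdist (ε : ℝ) (ψ : (Fin n → ℝ) → ℝ) (x : Pt n) : ℝ := vc x - bgraph ε ψ (hp x)

/-- A modulus of continuity. -/
def IsModulus (ω : ℝ → ℝ) : Prop :=
  ω 0 = 0 ∧ (∀ t, 0 ≤ ω t) ∧ Filter.Tendsto ω (nhdsWithin 0 (Set.Ioi 0)) (nhds 0)

/-- The class `C^{1,ω}_{M₀}` of boundary functions. -/
def MemC1Mod (M₀ : ℝ) (ω : ℝ → ℝ) (ψ : (Fin n → ℝ) → ℝ) : Prop :=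
  ContDiff ℝ 1 ψ ∧ (∀ x', 0 ≤ ψ x' ∧ ψ x' ≤ M₀) ∧
    (∀ x', ‖fderiv ℝ ψ x'‖ ≤ M₀) ∧
    ∀ x' y', ‖fderiv ℝ ψ x' - fderiv ℝ ψ y'‖ ≤ ω ‖x' - y'‖

/-- The class `C^{1,ν₀}_{M₀}` of boundary functions:
`0 ≤ ψ ≤ M₀` and `‖∇ψ‖_∞ + [∇ψ]_{C^{0,ν₀}} ≤ M₀`. -/
def MemC1Hold (M₀ ν₀ : ℝ) (ψ : (Fin n → ℝ) → ℝ) : Prop :=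
  ContDiff ℝ 1 ψ ∧ (∀ x', 0 ≤ ψ x' ∧ ψ x' ≤ M₀) ∧
    ∃ K L : ℝ, 0 ≤ K ∧ 0 ≤ L ∧ K + L ≤ M₀ ∧
      (∀ x', ‖fderiv ℝ ψ x'‖ ≤ K) ∧
      ∀ x' y', ‖fderiv ℝ ψ x' - fderiv ℝ ψ y'‖ ≤ L * ‖x' - y'‖ ^ ν₀

/-- Coefficient tensors `A = (A^{αβ}_{ij}(y))`. -/
abbrev Coeff (n N : ℕ) := Pt n → Fin (n + 1) → Fin (n + 1) → Fin N → Fin N → ℝ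

/-- The quadratic form `A(y)ξ·ξ` on `ℝ^{dN}`. -/
def qform (A : Coeff n N) (y : Pt n) (ξ : Fin (n + 1) → Fin N → ℝ) : ℝ :=
  ∑ α, ∑ β, ∑ i, ∑ j, A y α β i j * ξ α i * ξ β j

/-- The class `𝒜^{0,ν₀}`: `C^{0,ν₀}` with norm bound `M₀`, uniformly elliptic with
constant `lam`, and `ℤ^d`-periodic. -/
def MemA (lam ν₀ M₀ : ℝ) (A : Coeff n N) : Prop :=
  (∃ K L : ℝ, 0 ≤ K ∧ 0 ≤ L ∧ K + L ≤ M₀ ∧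
      (∀ y α β i j, |A y α β i j| ≤ K) ∧
      ∀ y z α β i j, |A y α β i j - A z α β i j| ≤ L * ‖y - z‖ ^ ν₀) ∧
  (∀ y ξ, lam * (∑ α, ∑ i, ξ α i ^ 2) ≤ qform A y ξ ∧
      qform A y ξ ≤ lam⁻¹ * ∑ α, ∑ i, ξ α i ^ 2) ∧
  ∀ (y : Pt n) (z : Fin (n + 1) → ℤ), A (y + fun α => (z α : ℝ)) = A y

/-- Coefficients oscillating at scale `ε`: `x ↦ A(x/ε)`. -/
def osc (ε : ℝ) (A : Coeff n N) : Coeff n N := fun x => A (ε⁻¹ • x)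

/-- The identity (Laplacian) coefficients. -/
def idCoeff (n N : ℕ) : Coeff n N := fun _ α β i j => if α = β ∧ i = j then 1 else 0

/-- Partial derivative `∂_α g(x)` of a scalar function. -/
def pd (g : Pt n → ℝ) (x : Pt n) (α : Fin (n + 1)) : ℝ := fderiv ℝ g x (Pi.single α 1)

/-- Smooth (vector-valued) test functions compactly supported in `Ω`. -/
def IsTest (Ω : Set (Pt n)) (φ : Pt n → Fin N → ℝ) : Prop :=
  ContDiff ℝ (⊤ : ℕ∞) φ ∧ HasCompactSupport φ ∧ tsupport φ ⊆ Ω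

/-- Smooth scalar test functions compactly supported in `Ω`. -/
def IsTestS (Ω : Set (Pt n)) (φ : Pt n → ℝ) : Prop :=
  ContDiff ℝ (⊤ : ℕ∞) φ ∧ HasCompactSupport φ ∧ tsupport φ ⊆ Ω

/-- The energy density `A∇u·∇φ = A^{αβ}_{ij} ∂_β u_j ∂_α φ_i`. -/
def ed (A : Coeff n N) (u φ : Pt n → Fin N → ℝ) (x : Pt n) : ℝ :=
  ∑ α, ∑ β, ∑ i, ∑ j, A x α β i j * pd (fun y => u y j) x β * pd (fun y => φ y i) x α

/-- `u` is a weak solution of `−∇·A∇u = f + ∇·F` in `Ω`. -/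
def WeakSol (A : Coeff n N) (Ω : Set (Pt n)) (f : Pt n → Fin N → ℝ)
    (F : Pt n → Fin (n + 1) → Fin N → ℝ) (u : Pt n → Fin N → ℝ) : Prop :=
  (∀ x ∈ Ω, DifferentiableAt ℝ u x) ∧
  ∀ φ : Pt n → Fin N → ℝ, IsTest Ω φ →
    ∫ x in Ω, ed A u φ x =
      (∫ x in Ω, ∑ i, f x i * φ x i) -
        ∫ x in Ω, ∑ α, ∑ i, F x α i * pd (fun y => φ y i) x α

/-- Zero Dirichlet condition on the boundary portion `Γ`, in the sense of continuity
up to the boundary. -/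
def ZeroBC (Ω Γ : Set (Pt n)) (u : Pt n → Fin N → ℝ) : Prop :=
  ContinuousOn u (Ω ∪ Γ) ∧ ∀ x ∈ Γ, u x = 0

/-- Matrix-valued weak solution of `−∇·A∇v = ∇·(A∇g)` in `Ω` (column-wise),
vanishing on `∂Ω`. -/
def CorrectorSol (A : Coeff n N) (Ω : Set (Pt n))
    (g v : Pt n → Fin N → Fin N → ℝ) : Prop :=
  (∀ x ∈ Ω, DifferentiableAt ℝ v x) ∧ ContinuousOn v (closure Ω) ∧
    (∀ x ∈ frontier Ω, v x = 0) ∧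
    ∀ φ : Pt n → Fin N → ℝ, IsTest Ω φ → ∀ m : Fin N,
      ∫ x in Ω, ∑ α, ∑ β, ∑ i, ∑ k,
          A x α β i k * pd (fun y => v y k m) x β * pd (fun y => φ y i) x α =
        - ∫ x in Ω, ∑ α, ∑ β, ∑ i, ∑ k,
            A x α β i k * pd (fun y => g y k m) x β * pd (fun y => φ y i) x α

/-- Scalar weak solution of `−Δv = Δg` in `Ω`, vanishing on `∂Ω`. -/
def ScalarCorrectorSol (Ω : Set (Pt n)) (g v : Pt n → ℝ) : Prop :=
  (∀ x ∈ Ω, DifferentiableAt ℝ v x) ∧ ContinuousOn v (closure Ω) ∧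
    (∀ x ∈ frontier Ω, v x = 0) ∧
    ∀ φ : Pt n → ℝ, IsTestS Ω φ →
      ∫ x in Ω, ∑ α, pd v x α * pd φ x α = - ∫ x in Ω, ∑ α, pd g x α * pd φ x α

/-- Scalar weak solution of `−Δu = 0` in `Ω`. -/
def HarmScalar (Ω : Set (Pt n)) (u : Pt n → ℝ) : Prop :=
  (∀ x ∈ Ω, DifferentiableAt ℝ u x) ∧
    ∀ φ : Pt n → ℝ, IsTestS Ω φ → ∫ x in Ω, ∑ α, pd u x α * pd φ x α = 0

/-- Zero Dirichlet condition, scalar version. -/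
def ZeroBCScalar (Ω Γ : Set (Pt n)) (u : Pt n → ℝ) : Prop :=
  ContinuousOn u (Ω ∪ Γ) ∧ ∀ x ∈ Γ, u x = 0

/-- `G` is a Green kernel for `−∇·A∇` on `Ω` with Dirichlet boundary conditions:
for each pole `x̃ ∈ Ω` and each column `m`, `G(·,x̃)eₘ` vanishes on `∂Ω` and
satisfies `∫_Ω A∇G(·,x̃)eₘ·∇φ = φ(x̃)ₘ` for every test function `φ`. -/
def IsGreen (A : Coeff n N) (Ω : Set (Pt n))
    (G : Pt n → Pt n → Fin N → Fin N → ℝ) : Prop :=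
  ∀ xt ∈ Ω,
    ContinuousOn (fun x => G x xt) (closure Ω \ {xt}) ∧
    (∀ x ∈ frontier Ω, G x xt = 0) ∧
    (∀ x ∈ Ω \ {xt}, DifferentiableAt ℝ (fun y => G y xt) x) ∧
    ∀ φ : Pt n → Fin N → ℝ, IsTest Ω φ → ∀ m : Fin N,
      ∫ x in Ω, ∑ α, ∑ β, ∑ i, ∑ k,
          A x α β i k * pd (fun y => G y xt k m) x β * pd (fun y => φ y i) x α = φ xt m

/-- The unit periodicity cell `[0,1)^d`. -/
def cell (n : ℕ) : Set (Pt n) := Set.pi Set.univ fun _ : Fin (n + 1) => Set.Ico (0 : ℝ) 1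

/-- `χ` is the mean-zero periodic cell corrector in direction `γ`, i.e. a weak
solution of `−∇·A∇χ^γ = ∂_α A^{αγ}` on the torus. -/
def IsCellCorrector (A : Coeff n N) (γ : Fin (n + 1))
    (χ : Pt n → Fin N → Fin N → ℝ) : Prop :=
  (∀ y, DifferentiableAt ℝ χ y) ∧
  (∀ (y : Pt n) (z : Fin (n + 1) → ℤ), χ (y + fun α => (z α : ℝ)) = χ y) ∧
  (∫ y in cell n, χ y) = 0 ∧
  ∀ φ : Pt n → Fin N → ℝ, ContDiff ℝ (⊤ : ℕ∞) φ → HasCompactSupport φ → ∀ m : Fin N,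
    ∫ y, ∑ α, ∑ β, ∑ i, ∑ k,
        A y α β i k * pd (fun z => χ z k m) y β * pd (fun z => φ z i) y α =
      - ∫ y, ∑ α, ∑ i, A y α γ i m * pd (fun z => φ z i) y α

/-- The homogenized coefficient matrix `Ā` (as constant coefficients). -/
def homog (A : Coeff n N) (χ : Fin (n + 1) → Pt n → Fin N → Fin N → ℝ) : Coeff n N :=
  fun _ α β i j =>
    (∫ y in cell n, A y α β i j) +
      ∑ γ, ∫ y in cell n, ∑ k, A y α γ i k * pd (fun z => χ β z k j) y γ

/-- Horizontal cutoff `ϑ'`: supported in `(-3/2,3/2)^{d-1}`, `≡ 1` on `(-1,1)^{d-1}`. -/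
def IsHCut (θ' : (Fin n → ℝ) → ℝ) : Prop :=
  ContDiff ℝ (⊤ : ℕ∞) θ' ∧ HasCompactSupport θ' ∧
    tsupport θ' ⊆ {x' | ‖x'‖ < 3 / 2} ∧ ∀ x', ‖x'‖ < 1 → θ' x' = 1

/-- Vertical cutoff `ϑ_d`: supported in `(-3M₀/2,3M₀/2)`, `≡ 1` on `(-M₀,M₀)`. -/
def IsVCut (M₀ : ℝ) (θd : ℝ → ℝ) : Prop :=
  ContDiff ℝ (⊤ : ℕ∞) θd ∧ HasCompactSupport θd ∧
    tsupport θd ⊆ {t | |t| < 3 * M₀ / 2} ∧ ∀ t, |t| < M₀ → θd t = 1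

/-- The cutoff `Θ(x', y_d) = ϑ'(x')ϑ_d(y_d)`. -/
def cutoff (θ' : (Fin n → ℝ) → ℝ) (θd : ℝ → ℝ) (x' : Fin n → ℝ) (yd : ℝ) : ℝ :=
  θ' x' * θd yd

/-- The flat half-space `ℝ^d_+`. -/
def flatHalf (n : ℕ) : Set (Pt n) := {x | 0 < vc x}

/-- The flat boundary `{x_d = 0}`. -/
def flatBdry (n : ℕ) : Set (Pt n) := {x | vc x = 0}

/-- The outward unit normal at a boundary point of a bumpy half-space. -/
def normalVec (ε : ℝ) (ψ : (Fin n → ℝ) → ℝ) (xt : Pt n) : Fin (n + 1) → ℝ :=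
  fun β =>
    (Fin.snoc (fun i : Fin n => fderiv ℝ ψ (ε⁻¹ • hp xt) (Pi.single i 1)) (-1 : ℝ) :
        Fin (n + 1) → ℝ) β /
      Real.sqrt (1 + ∑ i, fderiv ℝ ψ (ε⁻¹ • hp xt) (Pi.single i 1) ^ 2)

/-- The Poisson kernel `P^ε_{ij}(x,x̃) = −A^{αβ}_{kj}(x̃/ε) ∂_{x̃_α} G^ε_{ik}(x,x̃) n_β`
built from a Green kernel `G`. -/
def poissonK (ε : ℝ) (A : Coeff n N) (ψ : (Fin n → ℝ) → ℝ)
    (G : Pt n → Pt n → Fin N → Fin N → ℝ) (x xt : Pt n) : Fin N → Fin N → ℝ :=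
  fun i j =>
    -∑ α, ∑ β, ∑ k, A (ε⁻¹ • xt) α β k j *
        fderiv ℝ (fun y => G x y i k) xt (Pi.single α 1) * normalVec ε ψ xt β

end Bumpy

namespace Bumpy

variable {n N : ℕ}

/-! ### Scaling helper lemmas -/

/-- scaling as a measurable equiv -/
def smulEquiv (n : ℕ) (c : ℝ) (hc : c ≠ 0) : Pt n ≃ᵐ Pt n where
  toFun := fun x => c • x
  invFun := fun x => c⁻¹ • x
  left_inv := fun x => by simp [smul_smul, inv_mul_cancel₀ hc]
  right_inv := fun x => by simp [smul_smul, mul_inv_cancel₀ hc]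
  measurable_toFun := (continuous_id.const_smul c).measurable
  measurable_invFun := (continuous_id.const_smul c⁻¹).measurable

lemma map_smul_vol (c : ℝ) (hc : c ≠ 0) :
    (volume : Measure (Pt n)).map (smulEquiv n c hc) =
      ENNReal.ofReal ((|c| ^ (n + 1))⁻¹) • volume := by
  have : ((smulEquiv n c hc).toEquiv : Pt n → Pt n) = (c • ·) := rfl
  rw [show ⇑(smulEquiv n c hc) = ⇑(smulEquiv n c hc).toEquiv from rfl, this,
    Measure.map_addHaar_smul (μ := (volume : Measure (Pt n))) hc]
  congr 1
  rw [Module.finrank_fin_fun, abs_inv, abs_pow]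

lemma lintegral_comp_smul (c : ℝ) (hc : 0 < c) (g : Pt n → ENNReal) (S : Set (Pt n))
    (hS : MeasurableSet S) :
    ∫⁻ y in (fun y : Pt n => c • y) ⁻¹' S, g (c • y) =
      ENNReal.ofReal ((c ^ (n + 1))⁻¹) * ∫⁻ x in S, g x := by
  have habs : |c| = c := abs_of_pos hc
  calc ∫⁻ y in (fun y : Pt n => c • y) ⁻¹' S, g (c • y)
      = ∫⁻ y, g (smulEquiv n c hc.ne' y) ∂(volume.restrict ((smulEquiv n c hc.ne') ⁻¹' S)) := rfl
    _ = ∫⁻ x, g x ∂((volume.restrict ((smulEquiv n c hc.ne') ⁻¹' S)).map (smulEquiv n c hc.ne')) :=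
        (lintegral_map_equiv _ _).symm
    _ = ∫⁻ x, g x ∂((volume.map (smulEquiv n c hc.ne')).restrict S) := by
        rw [Measure.restrict_map (smulEquiv n c hc.ne').measurable hS]
    _ = ENNReal.ofReal ((c ^ (n + 1))⁻¹) * ∫⁻ x in S, g x := by
        rw [map_smul_vol, Measure.restrict_smul, lintegral_smul_measure, habs, smul_eq_mul]

lemma setIntegral_comp_smul (c : ℝ) (hc : 0 < c) (g : Pt n → ℝ) (S : Set (Pt n))
    (hS : MeasurableSet S) :
    ∫ y in (fun y : Pt n => c • y) ⁻¹' S, g (c • y) =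
      ((c ^ (n + 1))⁻¹) • ∫ x in S, g x := by
  have habs : |c| = c := abs_of_pos hc
  calc ∫ y in (fun y : Pt n => c • y) ⁻¹' S, g (c • y)
      = ∫ y, g (smulEquiv n c hc.ne' y) ∂(volume.restrict ((smulEquiv n c hc.ne') ⁻¹' S)) := rfl
    _ = ∫ x, g x ∂((volume.restrict ((smulEquiv n c hc.ne') ⁻¹' S)).map (smulEquiv n c hc.ne')) :=
        (integral_map_equiv _ _).symm
    _ = ∫ x, g x ∂((volume.map (smulEquiv n c hc.ne')).restrict S) := by
        rw [Measure.restrict_map (smulEquiv n c hc.ne').measurable hS]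
    _ = ((c ^ (n + 1))⁻¹) • ∫ x in S, g x := by
        rw [map_smul_vol, Measure.restrict_smul, integral_smul_measure, habs,
          ENNReal.toReal_ofReal (by positivity)]

lemma vol_preimage_smul (c : ℝ) (hc : 0 < c) (S : Set (Pt n)) (hS : MeasurableSet S) :
    volume ((fun y : Pt n => c • y) ⁻¹' S) = ENNReal.ofReal ((c ^ (n + 1))⁻¹) * volume S := by
  rw [← setLIntegral_one, ← setLIntegral_one]
  exact lintegral_comp_smul c hc (fun _ => 1) S hS

lemma setAverage_comp_smul (c : ℝ) (hc : 0 < c) (g : Pt n → ℝ) (S : Set (Pt n))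
    (hS : MeasurableSet S) :
    ⨍ y in (fun y : Pt n => c • y) ⁻¹' S, g (c • y) = ⨍ x in S, g x := by
  rw [setAverage_eq, setAverage_eq, measureReal_def, measureReal_def, vol_preimage_smul c hc S hS,
    setIntegral_comp_smul c hc g S hS, ENNReal.toReal_mul,
    ENNReal.toReal_ofReal (by positivity)]
  have hcd : ((c : ℝ) ^ (n + 1))⁻¹ ≠ 0 := by positivity
  rw [smul_eq_mul, smul_eq_mul, smul_eq_mul, mul_inv]
  field_simp

/-! ### Geometry of the bumpy sets under scaling -/

lemma hp_smul (c : ℝ) (x : Pt n) : hp (c • x) = c • hp x := rfl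

lemma vc_smul (c : ℝ) (x : Pt n) : vc (c • x) = c * vc x := rfl

lemma mul_lt_inv_iff {c : ℝ} (hc : 0 < c) (a b : ℝ) : c * a < b ↔ a < c⁻¹ * b := by
  rw [inv_mul_eq_div, lt_div_iff₀' hc]

lemma bgraph_smul (c ε : ℝ) (hc : c ≠ 0) (ψ : (Fin n → ℝ) → ℝ) (x' : Fin n → ℝ) :
    bgraph ε ψ (c • x') = c * bgraph (c⁻¹ * ε) ψ x' := by
  unfold bgraph
  rw [smul_smul, show ε⁻¹ * c = ((c⁻¹ * ε)⁻¹ : ℝ) by rw [mul_inv_rev, inv_inv],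
    ← mul_assoc, ← mul_assoc, mul_inv_cancel₀ hc, one_mul]

lemma preimage_smul_bumpyD (c ε r : ℝ) (hc : 0 < c) (ψ : (Fin n → ℝ) → ℝ) :
    (fun y : Pt n => c • y) ⁻¹' bumpyD n ε ψ r = bumpyD n (c⁻¹ * ε) ψ (c⁻¹ * r) := by
  ext x
  simp only [mem_preimage, bumpyD, mem_setOf_eq, hp_smul, vc_smul,
    bgraph_smul c ε hc.ne' ψ, norm_smul, Real.norm_eq_abs, abs_of_pos hc,
    mul_lt_inv_iff hc, mul_lt_mul_iff_right₀ hc, mul_add, inv_mul_cancel_left₀ hc.ne']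

lemma preimage_smul_bumpyB (c ε r : ℝ) (hc : 0 < c) (ψ : (Fin n → ℝ) → ℝ) :
    (fun y : Pt n => c • y) ⁻¹' bumpyB n ε ψ r = bumpyB n (c⁻¹ * ε) ψ (c⁻¹ * r) := by
  ext x
  simp only [mem_preimage, bumpyB, mem_setOf_eq, hp_smul, vc_smul,
    bgraph_smul c ε hc.ne' ψ, norm_smul, Real.norm_eq_abs, abs_of_pos hc,
    mul_lt_inv_iff hc, mul_right_inj' hc.ne']

lemma bumpyD_mono (ε : ℝ) (ψ : (Fin n → ℝ) → ℝ) {r r' : ℝ} (h : r ≤ r') :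
    bumpyD n ε ψ r ⊆ bumpyD n ε ψ r' := by
  rintro x ⟨h1, h2, h3⟩
  exact ⟨lt_of_lt_of_le h1 h, h2, by linarith⟩

lemma bumpyB_mono (ε : ℝ) (ψ : (Fin n → ℝ) → ℝ) {r r' : ℝ} (h : r ≤ r') :
    bumpyB n ε ψ r ⊆ bumpyB n ε ψ r' := by
  rintro x ⟨h1, h2⟩
  exact ⟨lt_of_lt_of_le h1 h, h2⟩

lemma continuous_hp : Continuous (hp (n := n)) :=
  continuous_pi fun i => continuous_apply _

lemma continuous_vc : Continuous (vc (n := n)) := continuous_apply _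

lemma isOpen_bumpyD (ε : ℝ) (ψ : (Fin n → ℝ) → ℝ) (hψ : Continuous ψ) (r : ℝ) :
    IsOpen (bumpyD n ε ψ r) := by
  have hb : Continuous fun x : Pt n => bgraph ε ψ (hp x) :=
    (continuous_const.mul (hψ.comp ((continuous_const_smul ε⁻¹).comp continuous_hp)))
  exact (isOpen_lt (continuous_hp.norm) continuous_const).inter
    ((isOpen_lt hb continuous_vc).inter (isOpen_lt continuous_vc (hb.add continuous_const)))

lemma pd_comp_smul (g : Pt n → ℝ) (c : ℝ) (x : Pt n) (hg : DifferentiableAt ℝ g (c • x))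
    (α : Fin (n + 1)) :
    pd (fun y => g (c • y)) x α = c * pd g (c • x) α := by
  unfold pd
  have hin : HasFDerivAt (fun y : Pt n => c • y) (c • ContinuousLinearMap.id ℝ (Pt n)) x :=
    (ContinuousLinearMap.id ℝ (Pt n)).hasFDerivAt.const_smul c
  have h1 : fderiv ℝ (fun y : Pt n => g (c • y)) x =
      (fderiv ℝ g (c • x)).comp (c • ContinuousLinearMap.id ℝ (Pt n)) :=
    (hg.hasFDerivAt.comp x hin).fderiv
  rw [h1]
  simp

lemma pd_const_mul (g : Pt n → ℝ) (c : ℝ) (x : Pt n) (hg : DifferentiableAt ℝ g x)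
    (α : Fin (n + 1)) : pd (fun y => c * g y) x α = c * pd g x α := by
  unfold pd
  rw [fderiv_const_mul hg c]
  simp

lemma pd_eq_zero_of_nmem_tsupport (g : Pt n → ℝ) (x : Pt n) (hx : x ∉ tsupport g)
    (α : Fin (n + 1)) : pd g x α = 0 := by
  unfold pd
  have hev : g =ᶠ[nhds x] (fun _ => (0 : ℝ)) :=
    Filter.eventually_of_mem ((isClosed_tsupport g).isOpen_compl.mem_nhds hx)
      (fun y hy => image_eq_zero_of_notMem_tsupport hy)
  rw [hev.fderiv_eq, fderiv_fun_const]
  simp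

lemma tsupport_apply_subset {η : Type*} (g : Pt n → η → ℝ) (i : η) :
    tsupport (fun x => g x i) ⊆ tsupport g := by
  apply closure_mono
  intro x hx
  simp only [Function.mem_support] at hx ⊢
  intro h0
  exact hx (by rw [h0]; rfl)

lemma eLpNorm_comp_smul_le {V : Type*} [NormedAddCommGroup V] [NormedSpace ℝ V]
    (g : Pt n → V) (c a : ℝ) (hc : 0 < c) (ha : 0 ≤ a) (S : Set (Pt n))
    (hS : MeasurableSet S) (p : ENNReal) (hp0 : p ≠ 0) (hpt : p ≠ ⊤)
    (hle : a ^ p.toReal * (c ^ (n + 1))⁻¹ ≤ 1) :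
    eLpNorm (fun y => a • g (c • y)) p (volume.restrict ((fun y : Pt n => c • y) ⁻¹' S))
      ≤ eLpNorm g p (volume.restrict S) := by
  rw [eLpNorm_eq_lintegral_rpow_enorm_toReal hp0 hpt, eLpNorm_eq_lintegral_rpow_enorm_toReal hp0 hpt]
  apply ENNReal.rpow_le_rpow _ (by positivity : (0:ℝ) ≤ 1 / p.toReal)
  have hpt0 : 0 ≤ p.toReal := ENNReal.toReal_nonneg
  calc ∫⁻ y in (fun y : Pt n => c • y) ⁻¹' S, (‖a • g (c • y)‖₊ : ENNReal) ^ p.toReal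
      = ∫⁻ y in (fun y : Pt n => c • y) ⁻¹' S,
          ENNReal.ofReal (a ^ p.toReal) * ((fun x => (‖g x‖₊ : ENNReal) ^ p.toReal) (c • y)) := by
        apply lintegral_congr
        intro y
        rw [nnnorm_smul, ENNReal.coe_mul, ENNReal.mul_rpow_of_nonneg _ _ hpt0]
        congr 1
        rw [← ENNReal.ofReal_rpow_of_nonneg ha hpt0]
        congr 1
        exact Real.enorm_eq_ofReal ha
    _ = ENNReal.ofReal (a ^ p.toReal) *
          ∫⁻ y in (fun y : Pt n => c • y) ⁻¹' S, (fun x => (‖g x‖₊ : ENNReal) ^ p.toReal) (c • y) :=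
        lintegral_const_mul' _ _ ENNReal.ofReal_ne_top
    _ = ENNReal.ofReal (a ^ p.toReal) * (ENNReal.ofReal ((c ^ (n + 1))⁻¹) *
          ∫⁻ x in S, (‖g x‖₊ : ENNReal) ^ p.toReal) := by
        congr 1
        exact lintegral_comp_smul c hc (fun x => (‖g x‖₊ : ENNReal) ^ p.toReal) S hS
    _ ≤ 1 * ∫⁻ x in S, (‖g x‖₊ : ENNReal) ^ p.toReal := by
        rw [← mul_assoc, ← ENNReal.ofReal_mul (by positivity)]
        apply mul_le_mul_left
        calc ENNReal.ofReal (a ^ p.toReal * (c ^ (n + 1))⁻¹) ≤ ENNReal.ofReal 1 :=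
              ENNReal.ofReal_le_ofReal hle
          _ = 1 := ENNReal.ofReal_one
    _ = ∫⁻ x in S, (‖g x‖₊ : ENNReal) ^ p.toReal := one_mul _


lemma measurableSet_bumpyD (ε : ℝ) (ψ : (Fin n → ℝ) → ℝ) (hψ : Continuous ψ) (r : ℝ) :
    MeasurableSet (bumpyD n ε ψ r) :=
  (isOpen_bumpyD ε ψ hψ r).measurableSet

end Bumpy

namespace Bumpy

/-- Lemma 3.5: iteration lemma for the boundary Hölder estimate,
where `ε₀` and `θ` are constants for which the improvement lemma holds. -/
theorem holder_iteration
    (n N : ℕ) (hn : 1 ≤ n) (hN : 1 ≤ N)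
    (lam ν₀ M₀ : ℝ) (hlam : lam ∈ Set.Ioo (0 : ℝ) 1)
    (hν₀ : ν₀ ∈ Set.Ioo (0 : ℝ) 1) (hM₀ : 0 < M₀)
    (ω : ℝ → ℝ) (hω : IsModulus ω) (κ κ' : ℝ) (hκ : 0 < κ) (hκ' : 0 < κ')
    (μ : ℝ) (hμ0 : 0 < μ)
    (hμ : μ < min (1 - (n + 1 : ℝ) / ((n + 1 : ℝ) + κ))
        (2 - (n + 1 : ℝ) / ((n + 1 : ℝ) / 2 + κ')))
    (ε₀ θ : ℝ) (hε₀ : 0 < ε₀) (hθ0 : 0 < θ) (hθ : θ < 1 / 8)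
    -- `ε₀` and `θ` are given by the improvement lemma:
    (himp : ∀ ψ : (Fin n → ℝ) → ℝ, MemC1Mod M₀ ω ψ →
      ∀ ε : ℝ, 0 < ε → ε < ε₀ →
      ∀ A : Coeff n N, MemA lam ν₀ M₀ A →
      ∀ f : Pt n → Fin N → ℝ, ∀ F : Pt n → Fin (n + 1) → Fin N → ℝ,
      ∀ u : Pt n → Fin N → ℝ,
        WeakSol (osc ε A) (bumpyD n ε ψ 1) f F u →
        ZeroBC (bumpyD n ε ψ 1) (bumpyB n ε ψ 1) u →
        (⨍ x in bumpyD n ε ψ 1, ‖u x‖ ^ 2) ≤ 1 →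
        eLpNorm f (ENNReal.ofReal ((n + 1 : ℝ) / 2 + κ'))
            (volume.restrict (bumpyD n ε ψ 1)) ≤ ENNReal.ofReal ε₀ →
        eLpNorm F (ENNReal.ofReal ((n + 1 : ℝ) + κ))
            (volume.restrict (bumpyD n ε ψ 1)) ≤ ENNReal.ofReal ε₀ →
        (⨍ x in bumpyD n ε ψ θ, ‖u x‖ ^ 2) ≤ θ ^ (2 * μ)) :
    ∀ k : ℕ, 1 ≤ k →
      ∀ ε : ℝ, 0 < ε → ε < θ ^ (k - 1) * ε₀ →
      ∀ ψ : (Fin n → ℝ) → ℝ, MemC1Mod M₀ ω ψ →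
      ∀ A : Coeff n N, MemA lam ν₀ M₀ A →
      ∀ f : Pt n → Fin N → ℝ, ∀ F : Pt n → Fin (n + 1) → Fin N → ℝ,
      ∀ u : Pt n → Fin N → ℝ,
        WeakSol (osc ε A) (bumpyD n ε ψ 1) f F u →
        ZeroBC (bumpyD n ε ψ 1) (bumpyB n ε ψ 1) u →
        (⨍ x in bumpyD n ε ψ 1, ‖u x‖ ^ 2) ≤ 1 →
        eLpNorm f (ENNReal.ofReal ((n + 1 : ℝ) / 2 + κ'))
            (volume.restrict (bumpyD n ε ψ 1)) ≤ ENNReal.ofReal ε₀ →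
        eLpNorm F (ENNReal.ofReal ((n + 1 : ℝ) + κ))
            (volume.restrict (bumpyD n ε ψ 1)) ≤ ENNReal.ofReal ε₀ →
        (⨍ x in bumpyD n ε ψ (θ ^ k), ‖u x‖ ^ 2) ≤ θ ^ (2 * (k : ℝ) * μ) := by
  intro k hk
  induction k, hk using Nat.le_induction with
  | base =>
    intro ε hε0 hε ψ hψ A hA f F u hsol hbc havg hf hF
    norm_num at hε
    have h := himp ψ hψ ε hε0 hε A hA f F u hsol hbc havg hf hF
    rw [pow_one]
    convert h using 2
    push_cast
    ring
  | succ k hk ih =>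
    intro ε hε0 hε ψ hψ A hA f F u hsol hbc havg hf hF
    simp only [Nat.add_sub_cancel] at hε
    have hθ1 : θ ≤ 1 := by linarith
    -- apply the induction hypothesis at scale θ^k
    have hεk : ε < θ ^ (k - 1) * ε₀ := by
      refine lt_of_lt_of_le hε ?_
      exact mul_le_mul_of_nonneg_right
        (pow_le_pow_of_le_one hθ0.le hθ1 (Nat.sub_le k 1)) hε₀.le
    have hIH : (⨍ x in bumpyD n ε ψ (θ ^ k), ‖u x‖ ^ 2) ≤ θ ^ (2 * (k : ℝ) * μ) :=
      ih ε hε0 hεk ψ hψ A hA f F u hsol hbc havg hf hF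
    -- rescaling set-up
    set b : ℝ := θ ^ k with hbdef
    have hb : 0 < b := pow_pos hθ0 k
    have hb1 : b ≤ 1 := pow_le_one₀ hθ0.le hθ1
    have hbrw : ∀ x : ℝ, b ^ x = θ ^ ((k : ℝ) * x) := by
      intro x
      rw [hbdef, ← Real.rpow_natCast θ k, ← Real.rpow_mul hθ0.le]
    set ε' : ℝ := b⁻¹ * ε with hε'def
    have hε'0 : 0 < ε' := mul_pos (inv_pos.mpr hb) hε0
    have hε' : ε' < ε₀ := by
      have := mul_lt_mul_of_pos_left hε (inv_pos.mpr hb)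
      rwa [inv_mul_cancel_left₀ hb.ne'] at this
    have hψc : Continuous ψ := hψ.1.continuous
    -- measurable sets
    have hΩm := measurableSet_bumpyD (n := n) ε ψ hψc 1
    have hΩ'm := measurableSet_bumpyD (n := n) ε' ψ hψc 1
    have hDbm := measurableSet_bumpyD (n := n) ε ψ hψc b
    have hsub : bumpyD n ε ψ b ⊆ bumpyD n ε ψ 1 := bumpyD_mono ε ψ hb1
    have hpre1 : (fun y : Pt n => b • y) ⁻¹' bumpyD n ε ψ b = bumpyD n ε' ψ 1 := by
      rw [preimage_smul_bumpyD b ε b hb ψ, inv_mul_cancel₀ hb.ne']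
    -- the rescaled solution and data
    set v : Pt n → Fin N → ℝ := fun y => (b ^ (-μ) : ℝ) • u (b • y) with hvdef
    set f' : Pt n → Fin N → ℝ := fun y => (b ^ ((2:ℝ) - μ) : ℝ) • f (b • y) with hf'def
    set F' : Pt n → Fin (n+1) → Fin N → ℝ :=
      (fun y => (b ^ ((1:ℝ) - μ) : ℝ) • F (b • y)) with hF'def
    have hwsol : WeakSol (osc ε' A) (bumpyD n ε' ψ 1) f' F' v := by
      have hbinv : (0:ℝ) < b⁻¹ := inv_pos.mpr hb
      have hb2μ : b ^ ((1:ℝ)-μ) * b = b ^ ((2:ℝ)-μ) := by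
        have h := Real.rpow_add hb (1-μ) 1
        rw [Real.rpow_one] at h
        rw [← h]
        congr 1
        ring
      constructor
      · intro x hx
        have hbx : b • x ∈ bumpyD n ε ψ b := by rw [← hpre1] at hx; exact hx
        have hud : DifferentiableAt ℝ u (b • x) := hsol.1 _ (hsub hbx)
        have hcomp : DifferentiableAt ℝ (fun y : Pt n => u (b • y)) x :=
          hud.comp x ((differentiable_id.const_smul b).differentiableAt)
        exact hcomp.const_smul (b ^ (-μ) : ℝ)
      · intro φ hφ
        obtain ⟨hφs, hφcs, hφsup⟩ := hφ
        set φt : Pt n → Fin N → ℝ := fun x => φ (b⁻¹ • x) with hφtdef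
        have hyy : ∀ y : Pt n, b⁻¹ • (b • y) = y := by
          intro y; rw [smul_smul, inv_mul_cancel₀ hb.ne', one_smul]
        have hφts : ContDiff ℝ (⊤:ℕ∞) φt := hφs.comp (contDiff_const_smul b⁻¹)
        have h1 : tsupport φt ⊆ (fun x : Pt n => b⁻¹ • x) ⁻¹' tsupport φ := by
          apply closure_minimal
          · intro x hx
            exact subset_tsupport φ hx
          · exact (isClosed_tsupport φ).preimage (continuous_const_smul b⁻¹)
        have hsupsub : tsupport φt ⊆ bumpyD n ε ψ b := by
          refine h1.trans ?_
          intro x hx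
          have hx' : x ∈ (fun y : Pt n => b⁻¹ • y) ⁻¹' bumpyD n ε' ψ 1 := hφsup hx
          rw [preimage_smul_bumpyD b⁻¹ ε' 1 hbinv ψ, inv_inv, hε'def,
            mul_inv_cancel_left₀ hb.ne', mul_one] at hx'
          exact hx'
        have hφtcs : HasCompactSupport φt := by
          have himg : (fun x : Pt n => b⁻¹ • x) ⁻¹' tsupport φ =
              (fun y : Pt n => b • y) '' tsupport φ := by
            ext x
            constructor
            · intro hx
              exact ⟨b⁻¹ • x, hx, by show b • b⁻¹ • x = x; rw [smul_smul, mul_inv_cancel₀ hb.ne', one_smul]⟩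
            · rintro ⟨y, hy, rfl⟩
              simpa [hyy y] using hy
          exact IsCompact.of_isClosed_subset (hφcs.image (continuous_id.const_smul b))
            (isClosed_tsupport φt) (h1.trans himg.subset)
        have hTest : IsTest (bumpyD n ε ψ 1) φt := ⟨hφts, hφtcs, hsupsub.trans hsub⟩
        have eqU := hsol.2 φt hTest
        -- vanishing off the support
        have hφtz : ∀ x, x ∉ bumpyD n ε ψ b → ∀ i α, pd (fun y => φt y i) x α = 0 := by
          intro x hx i α
          apply pd_eq_zero_of_nmem_tsupport
          intro hmem
          exact hx (hsupsub (tsupport_apply_subset φt i hmem))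
        have hφtz0 : ∀ x, x ∉ bumpyD n ε ψ b → φt x = 0 := by
          intro x hx
          apply image_eq_zero_of_notMem_tsupport
          intro hmem; exact hx (hsupsub hmem)
        -- reduction to the small set
        have redED : ∫ x in bumpyD n ε ψ 1, ed (osc ε A) u φt x
            = ∫ x in bumpyD n ε ψ b, ed (osc ε A) u φt x := by
          apply setIntegral_eq_of_subset_of_forall_diff_eq_zero hΩm hsub
          intro x hx
          simp only [ed]
          refine Finset.sum_eq_zero fun α _ => Finset.sum_eq_zero fun β _ =>
            Finset.sum_eq_zero fun i _ => Finset.sum_eq_zero fun j _ => ?_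
          rw [hφtz x hx.2 i α, mul_zero]
        have redf : ∫ x in bumpyD n ε ψ 1, ∑ i, f x i * φt x i
            = ∫ x in bumpyD n ε ψ b, ∑ i, f x i * φt x i := by
          apply setIntegral_eq_of_subset_of_forall_diff_eq_zero hΩm hsub
          intro x hx
          refine Finset.sum_eq_zero fun i _ => ?_
          rw [show φt x i = 0 from by rw [hφtz0 x hx.2]; rfl, mul_zero]
        have redF : ∫ x in bumpyD n ε ψ 1, ∑ α, ∑ i, F x α i * pd (fun y => φt y i) x α
            = ∫ x in bumpyD n ε ψ b, ∑ α, ∑ i, F x α i * pd (fun y => φt y i) x α := by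
          apply setIntegral_eq_of_subset_of_forall_diff_eq_zero hΩm hsub
          intro x hx
          refine Finset.sum_eq_zero fun α _ => Finset.sum_eq_zero fun i _ => ?_
          rw [hφtz x hx.2 i α, mul_zero]
        -- change of variables
        have cvED : ∫ y in bumpyD n ε' ψ 1, ed (osc ε A) u φt (b • y)
            = ((b:ℝ)^(n+1))⁻¹ * ∫ x in bumpyD n ε ψ b, ed (osc ε A) u φt x := by
          have h := setIntegral_comp_smul b hb (fun x => ed (osc ε A) u φt x)
            (bumpyD n ε ψ b) hDbm
          rw [hpre1] at h
          exact h
        have cvf : ∫ y in bumpyD n ε' ψ 1, ∑ i, f (b • y) i * φt (b • y) i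
            = ((b:ℝ)^(n+1))⁻¹ * ∫ x in bumpyD n ε ψ b, ∑ i, f x i * φt x i := by
          have h := setIntegral_comp_smul b hb (fun x => ∑ i, f x i * φt x i)
            (bumpyD n ε ψ b) hDbm
          rw [hpre1] at h
          exact h
        have cvF : ∫ y in bumpyD n ε' ψ 1,
              ∑ α, ∑ i, F (b • y) α i * pd (fun z => φt z i) (b • y) α
            = ((b:ℝ)^(n+1))⁻¹ * ∫ x in bumpyD n ε ψ b,
              ∑ α, ∑ i, F x α i * pd (fun z => φt z i) x α := by
          have h := setIntegral_comp_smul b hb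
            (fun x => ∑ α, ∑ i, F x α i * pd (fun z => φt z i) x α) (bumpyD n ε ψ b) hDbm
          rw [hpre1] at h
          exact h
        -- derivative of the rescaled test function
        have hφd : ∀ (y : Pt n) (i : Fin N) (α : Fin (n+1)),
            pd (fun z => φ z i) y α = b * pd (fun z => φt z i) (b • y) α := by
          intro y i α
          have hφdj : DifferentiableAt ℝ (fun w : Pt n => φ w i) (b⁻¹ • (b • y)) :=
            (ContinuousLinearMap.proj i : (Fin N → ℝ) →L[ℝ] ℝ).differentiableAt.comp _
              ((hφs.differentiable (by simp)) _)
          have e3 : pd (fun z : Pt n => (fun w : Pt n => φ w i) (b⁻¹ • z)) (b • y) α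
              = b⁻¹ * pd (fun w : Pt n => φ w i) (b⁻¹ • (b • y)) α :=
            pd_comp_smul (fun w : Pt n => φ w i) b⁻¹ (b • y) hφdj α
          rw [hyy y] at e3
          rw [show (fun z : Pt n => φt z i) = fun z : Pt n => (fun w : Pt n => φ w i) (b⁻¹ • z)
            from rfl, e3, ← mul_assoc, mul_inv_cancel₀ hb.ne', one_mul]
        -- pointwise identity for the energy densities
        have EqOn1 : Set.EqOn (fun y => ed (osc ε' A) v φ y)
            (fun y => b ^ ((2:ℝ)-μ) * ed (osc ε A) u φt (b • y)) (bumpyD n ε' ψ 1) := by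
          intro y hy
          have hby : b • y ∈ bumpyD n ε ψ b := by rw [← hpre1] at hy; exact hy
          have hud : DifferentiableAt ℝ u (b • y) := hsol.1 _ (hsub hby)
          have hudj : ∀ j : Fin N, DifferentiableAt ℝ (fun w : Pt n => u w j) (b • y) :=
            fun j => (ContinuousLinearMap.proj j :
              (Fin N → ℝ) →L[ℝ] ℝ).differentiableAt.comp _ hud
          have hvd : ∀ (j : Fin N) (β : Fin (n+1)),
              pd (fun z => v z j) y β = b ^ ((1:ℝ)-μ) * pd (fun w => u w j) (b • y) β := by
            intro j β
            have hgd : DifferentiableAt ℝ (fun z : Pt n => u (b • z) j) y :=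
              (hudj j).comp y ((differentiable_id.const_smul b).differentiableAt)
            have e1 : pd (fun z : Pt n => v z j) y β
                = b^(-μ) * pd (fun z : Pt n => (fun w : Pt n => u w j) (b • z)) y β := by
              rw [show (fun z : Pt n => v z j)
                  = fun z : Pt n => b^(-μ) * (fun z : Pt n => u (b • z) j) z from rfl]
              exact pd_const_mul _ _ _ hgd β
            have e2 : pd (fun z : Pt n => (fun w : Pt n => u w j) (b • z)) y β
                = b * pd (fun w : Pt n => u w j) (b • y) β :=
              pd_comp_smul (fun w : Pt n => u w j) b y (hudj j) β
            rw [e1, e2, ← mul_assoc]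
            congr 1
            have h := Real.rpow_add hb (-μ) 1
            rw [Real.rpow_one] at h
            rw [← h]
            congr 1
            ring
          have hAy : (ε'⁻¹ • y : Pt n) = ε⁻¹ • (b • y) := by
            rw [hε'def, smul_smul, mul_inv_rev, inv_inv]
          simp only [ed, Finset.mul_sum]
          refine Finset.sum_congr rfl fun α _ => Finset.sum_congr rfl fun β _ =>
            Finset.sum_congr rfl fun i _ => Finset.sum_congr rfl fun j _ => ?_
          rw [show osc ε' A y α β i j = osc ε A (b • y) α β i j from by
            unfold osc; rw [hAy], hvd j β, hφd y i α]
          calc osc ε A (b • y) α β i j * (b ^ ((1:ℝ)-μ) * pd (fun w => u w j) (b • y) β)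
                * (b * pd (fun z => φt z i) (b • y) α)
              = (b ^ ((1:ℝ)-μ) * b) * (osc ε A (b • y) α β i j
                * pd (fun w => u w j) (b • y) β * pd (fun z => φt z i) (b • y) α) := by ring
            _ = b ^ ((2:ℝ)-μ) * (osc ε A (b • y) α β i j
                * pd (fun w => u w j) (b • y) β * pd (fun z => φt z i) (b • y) α) := by
                rw [hb2μ]
        -- pointwise identities for the right-hand sides
        have hff : ∀ y : Pt n, ∑ i, f' y i * φ y i
            = b ^ ((2:ℝ)-μ) * ∑ i, f (b • y) i * φt (b • y) i := by
          intro y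
          rw [Finset.mul_sum]
          refine Finset.sum_congr rfl fun i _ => ?_
          simp only [hf'def, hφtdef, Pi.smul_apply, smul_eq_mul, hyy y]
          ring
        have hFF : ∀ y : Pt n, ∑ α, ∑ i, F' y α i * pd (fun z => φ z i) y α
            = b ^ ((2:ℝ)-μ) * ∑ α, ∑ i, F (b • y) α i * pd (fun z => φt z i) (b • y) α := by
          intro y
          simp only [Finset.mul_sum]
          refine Finset.sum_congr rfl fun α _ => Finset.sum_congr rfl fun i _ => ?_
          rw [hφd y i α]
          simp only [hF'def, Pi.smul_apply, smul_eq_mul]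
          calc b ^ ((1:ℝ)-μ) * F (b • y) α i * (b * pd (fun z => φt z i) (b • y) α)
              = (b ^ ((1:ℝ)-μ) * b) * (F (b • y) α i * pd (fun z => φt z i) (b • y) α) := by
                ring
            _ = b ^ ((2:ℝ)-μ) * (F (b • y) α i * pd (fun z => φt z i) (b • y) α) := by
                rw [hb2μ]
        -- assembling
        have T1 : ∫ x in bumpyD n ε' ψ 1, ed (osc ε' A) v φ x
            = b ^ ((2:ℝ)-μ) * (((b:ℝ)^(n+1))⁻¹
              * ∫ x in bumpyD n ε ψ 1, ed (osc ε A) u φt x) :=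
          calc ∫ x in bumpyD n ε' ψ 1, ed (osc ε' A) v φ x
              = ∫ y in bumpyD n ε' ψ 1, b ^ ((2:ℝ)-μ) * ed (osc ε A) u φt (b • y) :=
                setIntegral_congr_fun hΩ'm EqOn1
            _ = b ^ ((2:ℝ)-μ) * ∫ y in bumpyD n ε' ψ 1, ed (osc ε A) u φt (b • y) :=
                integral_const_mul _ _
            _ = _ := by rw [cvED, ← redED]
        have T2 : ∫ x in bumpyD n ε' ψ 1, ∑ i, f' x i * φ x i
            = b ^ ((2:ℝ)-μ) * (((b:ℝ)^(n+1))⁻¹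
              * ∫ x in bumpyD n ε ψ 1, ∑ i, f x i * φt x i) :=
          calc ∫ x in bumpyD n ε' ψ 1, ∑ i, f' x i * φ x i
              = ∫ y in bumpyD n ε' ψ 1, b ^ ((2:ℝ)-μ) * ∑ i, f (b • y) i * φt (b • y) i :=
                setIntegral_congr_fun hΩ'm (fun y _ => hff y)
            _ = b ^ ((2:ℝ)-μ) * ∫ y in bumpyD n ε' ψ 1, ∑ i, f (b • y) i * φt (b • y) i :=
                integral_const_mul _ _
            _ = _ := by rw [cvf, ← redf]
        have T3 : ∫ x in bumpyD n ε' ψ 1, ∑ α, ∑ i, F' x α i * pd (fun y => φ y i) x α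
            = b ^ ((2:ℝ)-μ) * (((b:ℝ)^(n+1))⁻¹
              * ∫ x in bumpyD n ε ψ 1, ∑ α, ∑ i, F x α i * pd (fun y => φt y i) x α) :=
          calc ∫ x in bumpyD n ε' ψ 1, ∑ α, ∑ i, F' x α i * pd (fun y => φ y i) x α
              = ∫ y in bumpyD n ε' ψ 1, b ^ ((2:ℝ)-μ)
                  * ∑ α, ∑ i, F (b • y) α i * pd (fun z => φt z i) (b • y) α :=
                setIntegral_congr_fun hΩ'm (fun y _ => hFF y)
            _ = b ^ ((2:ℝ)-μ) * ∫ y in bumpyD n ε' ψ 1,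
                  ∑ α, ∑ i, F (b • y) α i * pd (fun z => φt z i) (b • y) α :=
                integral_const_mul _ _
            _ = _ := by rw [cvF, ← redF]
        rw [T1, T2, T3, eqU]
        ring

    have hzbc : ZeroBC (bumpyD n ε' ψ 1) (bumpyB n ε' ψ 1) v := by
      have hpreB : (fun y : Pt n => b • y) ⁻¹' bumpyB n ε ψ b = bumpyB n ε' ψ 1 := by
        rw [preimage_smul_bumpyB b ε b hb ψ, inv_mul_cancel₀ hb.ne']
      obtain ⟨hcont, hzero⟩ := hbc
      constructor
      · have hmaps : MapsTo (fun y : Pt n => b • y) (bumpyD n ε' ψ 1 ∪ bumpyB n ε' ψ 1)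
            (bumpyD n ε ψ 1 ∪ bumpyB n ε ψ 1) := by
          rintro x (hx | hx)
          · left; exact hsub (by rw [← hpre1] at hx; exact hx)
          · right; exact bumpyB_mono ε ψ hb1 (by rw [← hpreB] at hx; exact hx)
        have hc : ContinuousOn (fun y : Pt n => u (b • y))
            (bumpyD n ε' ψ 1 ∪ bumpyB n ε' ψ 1) :=
          hcont.comp ((continuous_id.const_smul b).continuousOn) hmaps
        rw [hvdef]
        exact hc.const_smul (b ^ (-μ) : ℝ)
      · intro x hx
        have hz : u (b • x) = 0 := hzero _ (bumpyB_mono ε ψ hb1 (by rw [← hpreB] at hx; exact hx))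
        simp only [hvdef]
        rw [hz, smul_zero]

    have havg' : (⨍ x in bumpyD n ε' ψ 1, ‖v x‖ ^ 2) ≤ 1 := by
      have htr := setAverage_comp_smul b hb (fun x => ‖u x‖ ^ 2) (bumpyD n ε ψ b) hDbm
      rw [hpre1] at htr
      have hv2 : ∀ y : Pt n, ‖v y‖ ^ 2 = (b ^ (-μ:ℝ)) ^ 2 * ‖u (b • y)‖ ^ 2 := by
        intro y
        simp only [hvdef, norm_smul, Real.norm_eq_abs,
          abs_of_pos (Real.rpow_pos_of_pos hb (-μ))]
        ring
      calc (⨍ x in bumpyD n ε' ψ 1, ‖v x‖ ^ 2)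
          = ⨍ y in bumpyD n ε' ψ 1, (b ^ (-μ:ℝ))^2 * ‖u (b • y)‖^2 := by simp only [hv2]
        _ = (b ^ (-μ:ℝ))^2 * ⨍ y in bumpyD n ε' ψ 1, (fun x => ‖u x‖ ^ 2) (b • y) := by
            rw [setAverage_eq, setAverage_eq, integral_const_mul, smul_eq_mul, smul_eq_mul]; ring
        _ = (b ^ (-μ:ℝ))^2 * ⨍ x in bumpyD n ε ψ b, ‖u x‖^2 := by rw [htr]
        _ ≤ (b ^ (-μ:ℝ))^2 * θ ^ (2 * (k:ℝ) * μ) :=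
            mul_le_mul_of_nonneg_left hIH (by positivity)
        _ = 1 := by
            rw [pow_two, hbrw (-μ), ← Real.rpow_add hθ0, ← Real.rpow_add hθ0,
              show (k:ℝ)*(-μ) + (k:ℝ)*(-μ) + 2*(k:ℝ)*μ = 0 by ring, Real.rpow_zero]

    have hf' : eLpNorm f' (ENNReal.ofReal ((n + 1 : ℝ) / 2 + κ'))
        (volume.restrict (bumpyD n ε' ψ 1)) ≤ ENNReal.ofReal ε₀ := by
      have hptpos : (0:ℝ) < (n + 1 : ℝ) / 2 + κ' := by positivity
      have h := eLpNorm_comp_smul_le f b (b ^ ((2:ℝ) - μ)) hb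
        (Real.rpow_pos_of_pos hb _).le (bumpyD n ε ψ b) hDbm
        (ENNReal.ofReal ((n + 1 : ℝ) / 2 + κ'))
        (by simp only [ne_eq, ENNReal.ofReal_eq_zero, not_le]; linarith)
        ENNReal.ofReal_ne_top ?_
      · rw [hpre1] at h
        rw [hf'def]
        exact le_trans (le_trans h
          (eLpNorm_mono_measure f (Measure.restrict_mono hsub le_rfl))) hf
      · rw [ENNReal.toReal_ofReal hptpos.le, ← Real.rpow_natCast b (n+1),
          ← Real.rpow_neg hb.le, ← Real.rpow_mul hb.le, ← Real.rpow_add hb]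
        apply Real.rpow_le_one hb.le hb1
        have h3 : ((n:ℝ)+1) < (2-μ) * ((n+1:ℝ)/2+κ') := by
          have h2 : ((n:ℝ)+1)/((n+1:ℝ)/2+κ') < 2 - μ := by
            have hμf := lt_of_lt_of_le hμ (min_le_right _ _)
            linarith
          calc ((n:ℝ)+1) = (((n:ℝ)+1)/((n+1:ℝ)/2+κ')) * ((n+1:ℝ)/2+κ') := by field_simp
            _ < (2-μ) * ((n+1:ℝ)/2+κ') := mul_lt_mul_of_pos_right h2 hptpos
        push_cast
        linarith
    have hF' : eLpNorm F' (ENNReal.ofReal ((n + 1 : ℝ) + κ))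
        (volume.restrict (bumpyD n ε' ψ 1)) ≤ ENNReal.ofReal ε₀ := by
      have hqtpos : (0:ℝ) < (n + 1 : ℝ) + κ := by positivity
      have h := eLpNorm_comp_smul_le F b (b ^ ((1:ℝ) - μ)) hb
        (Real.rpow_pos_of_pos hb _).le (bumpyD n ε ψ b) hDbm
        (ENNReal.ofReal ((n + 1 : ℝ) + κ))
        (by simp only [ne_eq, ENNReal.ofReal_eq_zero, not_le]; linarith)
        ENNReal.ofReal_ne_top ?_
      · rw [hpre1] at h
        rw [hF'def]
        exact le_trans (le_trans h
          (eLpNorm_mono_measure F (Measure.restrict_mono hsub le_rfl))) hF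
      · rw [ENNReal.toReal_ofReal hqtpos.le, ← Real.rpow_natCast b (n+1),
          ← Real.rpow_neg hb.le, ← Real.rpow_mul hb.le, ← Real.rpow_add hb]
        apply Real.rpow_le_one hb.le hb1
        have h3 : ((n:ℝ)+1) < (1-μ) * ((n+1:ℝ)+κ) := by
          have h2 : ((n:ℝ)+1)/((n+1:ℝ)+κ) < 1 - μ := by
            have hμF := lt_of_lt_of_le hμ (min_le_left _ _)
            linarith
          calc ((n:ℝ)+1) = (((n:ℝ)+1)/((n+1:ℝ)+κ)) * ((n+1:ℝ)+κ) := by field_simp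
            _ < (1-μ) * ((n+1:ℝ)+κ) := mul_lt_mul_of_pos_right h2 hqtpos
        push_cast
        linarith

    have hconc := himp ψ hψ ε' hε'0 hε' A hA f' F' v hwsol hzbc havg' hf' hF'
    -- transport the conclusion back
    have hpreθ : (fun y : Pt n => b • y) ⁻¹' bumpyD n ε ψ (θ ^ (k+1)) = bumpyD n ε' ψ θ := by
      rw [preimage_smul_bumpyD b ε (θ^(k+1)) hb ψ]
      congr 1
      rw [pow_succ, hbdef, inv_mul_cancel_left₀ (pow_pos hθ0 k).ne']
    have htrans := setAverage_comp_smul b hb (fun x => ‖u x‖ ^ 2) (bumpyD n ε ψ (θ ^ (k+1)))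
        (measurableSet_bumpyD ε ψ hψc _)
    rw [hpreθ] at htrans
    rw [← htrans]
    have hv2 : ∀ y, ‖u (b • y)‖ ^ 2 = (b ^ (μ:ℝ)) ^ 2 * ‖v y‖ ^ 2 := by
      intro y
      have h1 : ‖v y‖ = b ^ (-μ) * ‖u (b • y)‖ := by
        simp only [hvdef, norm_smul, Real.norm_eq_abs,
          abs_of_pos (Real.rpow_pos_of_pos hb (-μ))]
      rw [h1]
      have h2 : (b ^ (μ:ℝ)) * (b ^ (-μ:ℝ)) = 1 := by
        rw [← Real.rpow_add hb]; simp
      calc ‖u (b • y)‖^2 = ((b ^ (μ:ℝ)) * (b ^ (-μ:ℝ)))^2 * ‖u (b • y)‖^2 := by rw [h2]; ring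
        _ = (b ^ (μ:ℝ))^2 * (b ^ (-μ:ℝ) * ‖u (b • y)‖)^2 := by ring
    calc (⨍ y in bumpyD n ε' ψ θ, ‖u (b • y)‖ ^ 2)
        = ⨍ y in bumpyD n ε' ψ θ, (b ^ (μ:ℝ))^2 * ‖v y‖^2 := by simp only [hv2]
      _ = (b ^ (μ:ℝ))^2 * ⨍ y in bumpyD n ε' ψ θ, ‖v y‖^2 := by
          rw [setAverage_eq, setAverage_eq, integral_const_mul, smul_eq_mul, smul_eq_mul]; ring
      _ ≤ (b ^ (μ:ℝ))^2 * θ ^ (2*μ) := mul_le_mul_of_nonneg_left hconc (by positivity)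
      _ = θ ^ (2 * ((k+1 : ℕ):ℝ) * μ) := by
          rw [pow_two, hbrw μ, ← Real.rpow_add hθ0, ← Real.rpow_add hθ0]
          congr 1
          push_cast
          ring



end Bumpy
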